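/- Let q be a prime power, n a positive integer coprime to q, and γ ∈ ZMod n. Let n_γ denote the additive order of γ in ZMod n. Then the q-cyclotomic coset c_{n/q}(γ) is an equal-difference set (i.e., a coset of the additive subgroup of ZMod n generated by the image of some positive divisor d of n) if and only if both of the following hold: (i) rad(n_γ) divides q − 1, and (ii) if 8 divides n_γ then q ≡ 1 (mod 4). -/
import Mathlib


lemma edc_geom (q : ℕ) (hq : 1 ≤ q) (i : ℕ) :
    (q - 1) * (∑ j ∈ Finset.range i, q ^ j) + 1 = q ^ i := by
  induction i with
  | zero => simp
  | succ i ih =>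
    rw [Finset.sum_range_succ, Nat.mul_add, pow_succ]
    have h1 : (q - 1) * q ^ i = q ^ i * q - q ^ i := by
      rw [Nat.sub_one_mul, Nat.mul_comm]
    have h2 : 1 ≤ q ^ i := Nat.one_le_pow _ _ hq
    have h3 : q ^ i ≤ q ^ i * q := Nat.le_mul_of_pos_right _ hq
    omega

lemma edc_oddsum (q : ℕ) (hq : q % 2 = 1) {i : ℕ} (hi : i % 2 = 1) :
    ¬ 2 ∣ ∑ j ∈ Finset.range i, q ^ j := by
  intro h
  have h0 : ((∑ j ∈ Finset.range i, q ^ j : ℕ) : ZMod 2) = 0 :=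
    (ZMod.natCast_eq_zero_iff _ _).mpr h
  have hq2 : (q : ZMod 2) = 1 := by
    rw [← ZMod.natCast_mod q 2, hq, Nat.cast_one]
  rw [Nat.cast_sum] at h0
  simp only [Nat.cast_pow, hq2, one_pow, Finset.sum_const, Finset.card_range, nsmul_eq_mul,
    mul_one] at h0
  have : (2 : ℕ) ∣ i := (ZMod.natCast_eq_zero_iff _ _).mp h0
  omega

lemma edc_lte {p q : ℕ} (hp : p.Prime) (hq2 : 2 ≤ q) (hpq : p ∣ q - 1)
    (hsp : p ≠ 2 ∨ q % 4 = 1) {i : ℕ} (hi : i ≠ 0) :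
    (q ^ i - 1).factorization p = (q - 1).factorization p + i.factorization p := by
  haveI : Fact p.Prime := ⟨hp⟩
  have hq1 : (1:ℕ) < q := hq2
  have hpnq : ¬ p ∣ q := by
    intro h
    have h2 := Nat.dvd_sub h hpq
    rw [Nat.sub_sub_self (le_of_lt hq1)] at h2
    exact hp.one_lt.ne' (Nat.dvd_one.mp h2)
  rcases hp.eq_two_or_odd' with rfl | hodd
  · have hq4 : q % 4 = 1 := hsp.resolve_left (by simp)
    have hqodd : q % 2 = 1 := by omega
    rcases Nat.even_or_odd i with hieven | hiodd
    · have key := padicValNat.pow_two_sub_pow (x := q) (y := 1) hq1 (by simpa using hpq)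
        (by omega) hi hieven
      simp only [one_pow] at key
      have h1 : padicValNat 2 (q + 1) = 1 := by
        have hne : q + 1 ≠ 0 := by omega
        rw [← Nat.factorization_def _ hp]
        apply le_antisymm
        · by_contra hlt
          have : 2 ^ 2 ∣ q + 1 := (Nat.Prime.pow_dvd_iff_le_factorization hp hne).mpr (by omega)
          omega
        · exact (Nat.Prime.pow_dvd_iff_le_factorization hp hne).mp (by simpa using (by omega : 2 ∣ q + 1))
      rw [Nat.factorization_def _ hp, Nat.factorization_def _ hp, Nat.factorization_def _ hp]
      omega
    · obtain ⟨hiodd'⟩ : i % 2 = 1 ∧ True := ⟨Nat.odd_iff.mp hiodd, trivial⟩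
      have hgeom : q ^ i - 1 = (q - 1) * (∑ j ∈ Finset.range i, q ^ j) := by
        have := edc_geom q (by omega) i
        omega
      have hs := edc_oddsum q hqodd hiodd'
      have hsne : (∑ j ∈ Finset.range i, q ^ j) ≠ 0 := by
        intro h0; exact hs (h0 ▸ dvd_zero 2)
      rw [hgeom, Nat.factorization_mul (by omega) hsne]
      simp only [Finsupp.add_apply]
      rw [Nat.factorization_eq_zero_of_not_dvd hs, Nat.factorization_eq_zero_of_not_dvd (by omega : ¬ 2 ∣ i)]
  · have key := padicValNat.pow_sub_pow (x := q) (y := 1) hodd hq1 (by simpa using hpq) hpnq hi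
    simp only [one_pow] at key
    rw [Nat.factorization_def _ hp, Nat.factorization_def _ hp, Nat.factorization_def _ hp]
    exact key




lemma edc_C (q m : ℕ) (hq2 : 2 ≤ q) (hm0 : m ≠ 0)
    (hrad : ∀ p : ℕ, p.Prime → p ∣ m → p ∣ q - 1)
    (h8 : 8 ∣ m → q % 4 = 1) (i : ℕ) :
    m ∣ q ^ i - 1 ↔ m / Nat.gcd m (q - 1) ∣ i := by
  rcases Nat.eq_zero_or_pos i with rfl | hi0
  · simp
  have hi : i ≠ 0 := hi0.ne'
  have hq1 : q - 1 ≠ 0 := by omega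
  have he : Nat.gcd m (q - 1) ∣ m := Nat.gcd_dvd_left _ _
  have ht0 : m / Nat.gcd m (q - 1) ≠ 0 := by
    have := Nat.div_mul_cancel he
    intro h; rw [h] at this; simp at this; exact hm0 this.symm
  have hx0 : q ^ i - 1 ≠ 0 := by
    have : 2 ≤ q ^ i := le_trans hq2 (Nat.le_self_pow hi q)
    omega
  rw [← Nat.factorization_le_iff_dvd hm0 hx0, ← Nat.factorization_le_iff_dvd ht0 hi,
    Finsupp.le_def, Finsupp.le_def]
  apply forall_congr'
  intro p
  rw [Nat.factorization_div he, Nat.factorization_gcd hm0 hq1]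
  simp only [Finsupp.tsub_apply, Finsupp.inf_apply]
  by_cases hp : p.Prime
  swap
  · simp [Nat.factorization_eq_zero_of_not_prime _ hp]
  by_cases hpm : p ∣ m
  swap
  · simp [Nat.factorization_eq_zero_of_not_dvd hpm]
  have hpq : p ∣ q - 1 := hrad p hp hpm
  set a := m.factorization p with ha
  set b := (q - 1).factorization p with hb
  have ha1 : 1 ≤ a := (Nat.Prime.pow_dvd_iff_le_factorization hp hm0).mp (by simpa using hpm)
  have hb1 : 1 ≤ b := (Nat.Prime.pow_dvd_iff_le_factorization hp hq1).mp (by simpa using hpq)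
  rcases le_or_gt a b with hab | hba
  · have hdvd : p ^ a ∣ q ^ i - 1 := by
      calc p ^ a ∣ p ^ b := pow_dvd_pow p hab
      _ ∣ q - 1 := Nat.ordProj_dvd _ _
      _ ∣ q ^ i - 1 := by simpa using Nat.sub_dvd_pow_sub_pow q 1 i
    have := (Nat.Prime.pow_dvd_iff_le_factorization hp hx0).mp hdvd
    omega
  · by_cases hsp : p ≠ 2 ∨ q % 4 = 1
    · rw [edc_lte hp hq2 hpq hsp hi]
      omega
    · push_neg at hsp
      obtain ⟨hp2, hq4⟩ := hsp
      subst hp2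
      have hqodd : q % 2 = 1 := by
        have : (2:ℕ) ∣ q - 1 := hpq
        omega
      have hq43 : q % 4 = 3 := by omega
      have hb1' : b = 1 := by
        apply le_antisymm
        · by_contra hlt
          have : 2 ^ 2 ∣ q - 1 := (Nat.Prime.pow_dvd_iff_le_factorization hp hq1).mpr (by omega)
          omega
        · exact hb1
      have h8m : ¬ 8 ∣ m := fun h => by omega
      have ha2 : a ≤ 2 := by
        by_contra hlt
        apply h8m
        calc (8:ℕ) = 2 ^ 3 := by norm_num
        _ ∣ 2 ^ a := pow_dvd_pow 2 (by omega)
        _ ∣ m := Nat.ordProj_dvd _ _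
      have ha2' : a = 2 := by omega
      rw [ha2', hb1', show (2:ℕ) ⊓ 1 = 1 from rfl]
      -- goal : 2 ≤ (q^i-1).factorization 2 ↔ 2 - min 2 1 ≤ i.factorization 2
      have key : (4 ∣ q ^ i - 1) ↔ 2 ∣ i := by
        constructor
        · intro h4
          by_contra hodd
          have hiodd : i % 2 = 1 := by omega
          have hcast : ((q : ZMod 4)) = 3 := by
            rw [← ZMod.natCast_mod q 4, hq43]; rfl
          have h0 : ((q ^ i - 1 : ℕ) : ZMod 4) = 0 :=
            (ZMod.natCast_eq_zero_iff _ _).mpr h4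
          rw [Nat.cast_sub (Nat.one_le_pow _ _ (by omega)), Nat.cast_pow, hcast,
            Nat.cast_one] at h0
          have hieq : i = 2 * (i / 2) + 1 := by omega
          rw [hieq, pow_add, pow_mul] at h0
          rw [show ((3:ZMod 4) ^ 2) = 1 from by decide, one_pow, pow_one, one_mul] at h0
          exact absurd h0 (by decide)
        · rintro ⟨c, rfl⟩
          have : q ^ (2 * c) - 1 = (q ^ 2) ^ c - 1 ^ c := by rw [← pow_mul]; norm_num
          rw [this]
          have h4 : (4:ℕ) ∣ q ^ 2 - 1 := by
            have : q ^ 2 - 1 = (q - 1) * (q + 1) := by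
              have : q ^ 2 = q * q := sq q
              rw [this, Nat.sub_one_mul, Nat.mul_add]
              omega
            rw [this]
            have : (4:ℕ) ∣ q + 1 := by omega
            exact Dvd.dvd.mul_left this (q - 1)
          exact dvd_trans h4 (Nat.sub_dvd_pow_sub_pow _ _ _)
      constructor
      · intro h
        have h4' : (4:ℕ) ∣ q ^ i - 1 := by
          have h5 := (Nat.Prime.pow_dvd_iff_le_factorization (k := 2) hp hx0).mpr h
          rw [show (2:ℕ)^2 = 4 from by norm_num] at h5
          exact h5
        have h2i := key.mp h4'
        have h6 := (Nat.Prime.pow_dvd_iff_le_factorization (k := 1) hp hi).mp (by rw [pow_one]; exact h2i)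
        omega
      · intro h
        have h2i : (2:ℕ) ∣ i := by
          have h5 := (Nat.Prime.pow_dvd_iff_le_factorization (k := 1) hp hi).mpr (by omega)
          rwa [pow_one] at h5
        have h4' := key.mpr h2i
        have h6 := (Nat.Prime.pow_dvd_iff_le_factorization (k := 2) hp hx0).mp
          (by rw [show (2:ℕ)^2 = 4 from by norm_num]; exact h4')
        omega


lemma edc_gam {n : ℕ} (γ : ZMod n) (a b : ℕ) :
    γ * (a : ZMod n) = γ * (b : ZMod n) ↔ ((a : ZMod (addOrderOf γ)) = (b : ZMod (addOrderOf γ))) := by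
  have hs : ∀ c : ℕ, γ * (c : ZMod n) = (c : ℤ) • γ := by
    intro c
    rw [natCast_zsmul, nsmul_eq_mul, mul_comm]
  rw [hs, hs, ZMod.natCast_eq_natCast_iff, Nat.modEq_iff_dvd]
  constructor
  · intro h
    have h2 : ((a : ℤ) - b) • γ = 0 := by rw [sub_smul, h, sub_self]
    exact (dvd_sub_comm).mp ((addOrderOf_dvd_iff_zsmul_eq_zero).mpr h2)
  · intro h
    have h2 : ((b : ℤ) - a) • γ = 0 := (addOrderOf_dvd_iff_zsmul_eq_zero).mp h
    rw [sub_smul] at h2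
    exact (sub_eq_zero.mp h2).symm
lemma edc_closure_mem {n t : ℕ} [NeZero n] (htn : t ∣ n) (ht0 : t ≠ 0) (x : ZMod n) :
    x ∈ AddSubgroup.closure {((n / t : ℕ) : ZMod n)} ↔ t • x = 0 := by
  constructor
  · intro hx
    obtain ⟨c, rfl⟩ := AddSubgroup.mem_closure_singleton.mp hx
    rw [smul_comm]
    have : t • ((n / t : ℕ) : ZMod n) = 0 := by
      rw [nsmul_eq_mul, ← Nat.cast_mul, Nat.mul_div_cancel' htn, ZMod.natCast_self]
    rw [this, smul_zero]
  · intro hx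
    have hval : (n : ℕ) ∣ t * x.val := by
      have : ((t * x.val : ℕ) : ZMod n) = 0 := by
        push_cast
        rw [ZMod.natCast_val, ZMod.cast_id]
        rw [← nsmul_eq_mul]
        exact hx
      exact (ZMod.natCast_eq_zero_iff _ _).mp this
    have hdvd : (n / t) ∣ x.val := by
      obtain ⟨c, hc⟩ := hval
      obtain ⟨s, hs⟩ := htn
      have hsnt : n / t = s := by rw [hs, Nat.mul_div_cancel_left _ (Nat.pos_of_ne_zero ht0)]
      rw [hsnt]
      refine ⟨c, ?_⟩
      have : t * x.val = t * (s * c) := by rw [hc, hs]; ring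
      exact Nat.eq_of_mul_eq_mul_left (Nat.pos_of_ne_zero ht0) this
    obtain ⟨c, hc⟩ := hdvd
    apply AddSubgroup.mem_closure_singleton.mpr
    refine ⟨(c : ℤ), ?_⟩
    rw [natCast_zsmul, nsmul_eq_mul]
    have hxx : ((x.val : ℕ) : ZMod n) = x := ZMod.natCast_rightInverse x
    rw [← hxx, hc]
    push_cast
    ring


lemma edc_fwd (q m : ℕ) (hq2 : 2 ≤ q) (hm0 : m ≠ 0) (hco : Nat.Coprime m q)
    (hcl : ∀ i j : ℕ, ∃ k, (q : ZMod m) ^ i + (q : ZMod m) ^ j = 1 + (q : ZMod m) ^ k) :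
    (∀ p : ℕ, p.Prime → p ∣ m → p ∣ q - 1) ∧ (8 ∣ m → q % 4 = 1) := by
  haveI : NeZero m := ⟨hm0⟩
  have main : ∀ p : ℕ, p.Prime → p ∣ m → p ∣ q - 1 := by
    intro p hp hpm
    haveI : Fact p.Prime := ⟨hp⟩
    have hclp : ∀ i j : ℕ, ∃ k, (q : ZMod p) ^ i + (q : ZMod p) ^ j = 1 + (q : ZMod p) ^ k := by
      intro i j
      obtain ⟨k, hk⟩ := hcl i j
      refine ⟨k, ?_⟩
      have := congrArg (ZMod.castHom hpm (ZMod p)) hk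
      simpa only [map_add, map_pow, map_one, map_natCast] using this
    have hunit : IsUnit (q : ZMod p) := by
      rw [ZMod.isUnit_iff_coprime]
      exact (Nat.Coprime.coprime_dvd_left hpm hco).symm
    set x₀ : ZMod p := (q : ZMod p) - 1 with hx₀
    have hmul : ∀ c : ℕ, ∃ i, (c : ZMod p) * x₀ = (q : ZMod p) ^ i - 1 := by
      intro c
      induction c with
      | zero => exact ⟨0, by simp⟩
      | succ c ih =>
        obtain ⟨i, hi⟩ := ih
        obtain ⟨k, hk⟩ := hclp i 1
        refine ⟨k, ?_⟩
        push_cast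
        rw [add_mul, one_mul, hi, hx₀]
        have : (q : ZMod p) ^ i + (q:ZMod p) = 1 + (q:ZMod p) ^ k := by simpa using hk
        linear_combination this
    by_cases hz : x₀ = 0
    · have : ((q - 1 : ℕ) : ZMod p) = 0 := by
        rw [Nat.cast_sub (by omega : 1 ≤ q), Nat.cast_one]
        exact hz
      exact (ZMod.natCast_eq_zero_iff _ _).mp this
    · exfalso
      obtain ⟨i, hi⟩ := hmul ((-x₀⁻¹).val)
      rw [ZMod.natCast_val, ZMod.cast_id, neg_mul, inv_mul_cancel₀ hz] at hi
      have : (q : ZMod p) ^ i = 0 := by linear_combination -hi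
      exact (hunit.pow i).ne_zero this
  refine ⟨main, ?_⟩
  intro h8m
  have h2m : 2 ∣ m := dvd_trans (by norm_num) h8m
  have hq1 : 2 ∣ q - 1 := main 2 Nat.prime_two h2m
  have hqodd : q % 2 = 1 := by omega
  by_contra hq4
  have hq43 : q % 4 = 3 := by omega
  have hcl8 : ∃ k, (q : ZMod 8) + (q : ZMod 8) = 1 + (q : ZMod 8) ^ k := by
    obtain ⟨k, hk⟩ := hcl 1 1
    refine ⟨k, ?_⟩
    have := congrArg (ZMod.castHom h8m (ZMod 8)) hk
    simpa only [map_add, map_pow, map_one, map_natCast, pow_one] using this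
  obtain ⟨k, hk⟩ := hcl8
  have hr : (q : ZMod 8) = 3 ∨ (q : ZMod 8) = 7 := by
    have h38 : q % 8 = 3 ∨ q % 8 = 7 := by omega
    rcases h38 with h | h
    · left; rw [← ZMod.natCast_mod q 8, h]; rfl
    · right; rw [← ZMod.natCast_mod q 8, h]; rfl
  have hkeq : k = 2 * (k / 2) + k % 2 := by omega
  have hsq : ((q : ZMod 8)) ^ 2 = 1 := by rcases hr with hr' | hr' <;> rw [hr'] <;> decide
  rw [hkeq, pow_add, pow_mul, hsq, one_pow, one_mul] at hk
  have hk2 : k % 2 = 0 ∨ k % 2 = 1 := by omega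
  rcases hk2 with h2 | h2 <;> rw [h2] at hk <;>
    rcases hr with hr | hr <;> rw [hr] at hk <;> revert hk <;> decide










/-- The `q`-cyclotomic coset `c_{n/q}(γ) = {γ·q^i : i ∈ ℕ}` is an
equal-difference set (a coset of the additive subgroup of `ZMod n` generated by the image of
some positive divisor `d` of `n`) iff `rad(n_γ) ∣ q - 1` and (`8 ∣ n_γ → q ≡ 1 (mod 4)`),
where `n_γ` is the additive order of `γ`. -/
theorem cyclotomic_coset_equal_difference_iff (q n : ℕ) (hq : IsPrimePow q) (hn : 0 < n)
    (hco : Nat.Coprime n q) (γ : ZMod n) :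
    (∃ d : ℕ, 0 < d ∧ d ∣ n ∧ ∃ γ₀ : ZMod n,
        {x : ZMod n | ∃ i : ℕ, x = γ * (q : ZMod n) ^ i} =
          (γ₀ + ·) '' ((AddSubgroup.closure {((d : ZMod n))} :
            AddSubgroup (ZMod n)) : Set (ZMod n))) ↔
    ((∏ p ∈ (addOrderOf γ).primeFactors, p) ∣ q - 1 ∧
      (8 ∣ addOrderOf γ → q % 4 = 1)) := by
  haveI : NeZero n := ⟨hn.ne'⟩
  have hq2 : 2 ≤ q := hq.two_le
  set m := addOrderOf γ with hmdef
  have hmn : m ∣ n := by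
    have h1 : m ∣ Nat.card (ZMod n) := addOrderOf_dvd_natCard γ
    simpa [Nat.card_zmod] using h1
  have hm0 : m ≠ 0 := (addOrderOf_pos γ).ne'
  haveI : NeZero m := ⟨hm0⟩
  have hcmq : Nat.Coprime m q := Nat.Coprime.coprime_dvd_left hmn hco
  have hkeyiff : ∀ a b : ℕ, γ * (a : ZMod n) = γ * (b : ZMod n) ↔ ((a : ZMod m) = b) :=
    fun a b => edc_gam γ a b
  constructor
  · rintro ⟨d, hd0, hdn, γ₀, hset⟩
    have hcl : ∀ i j : ℕ, ∃ k, (q : ZMod m) ^ i + (q : ZMod m) ^ j = 1 + (q : ZMod m) ^ k := by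
      intro i j
      have hmem : ∀ i : ℕ, γ * (q : ZMod n) ^ i ∈
          (γ₀ + ·) '' ((AddSubgroup.closure {((d : ZMod n))} :
            AddSubgroup (ZMod n)) : Set (ZMod n)) := by
        intro i'; rw [← hset]; exact ⟨i', rfl⟩
      obtain ⟨ai, hiK, hieq⟩ := hmem i
      obtain ⟨aj, hjK, hjeq⟩ := hmem j
      obtain ⟨a0, h0K, h0eq⟩ := hmem 0
      simp only at hieq hjeq h0eq
      have h0eq' : γ₀ + a0 = γ := by simpa using h0eq
      have hsum : γ * (q : ZMod n) ^ i + γ * (q : ZMod n) ^ j - γ ∈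
          {x : ZMod n | ∃ i : ℕ, x = γ * (q : ZMod n) ^ i} := by
        rw [hset]
        refine ⟨ai + aj - a0, ?_, ?_⟩
        · exact AddSubgroup.sub_mem _ (AddSubgroup.add_mem _ hiK hjK) h0K
        · simp only
          linear_combination hieq + hjeq - h0eq'
      obtain ⟨k, hk⟩ := hsum
      have hcast : γ * ((q ^ i + q ^ j : ℕ) : ZMod n) = γ * ((q ^ k + 1 : ℕ) : ZMod n) := by
        push_cast
        linear_combination hk
      have h2 := (hkeyiff _ _).mp hcast
      refine ⟨k, ?_⟩
      push_cast at h2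
      linear_combination h2
    obtain ⟨hradp, h8⟩ := edc_fwd q m hq2 hm0 hcmq hcl
    refine ⟨?_, h8⟩
    apply Finset.prod_primes_dvd
    · intro p hp; exact (Nat.prime_of_mem_primeFactors hp).prime
    · intro p hp
      exact hradp p (Nat.prime_of_mem_primeFactors hp) (Nat.dvd_of_mem_primeFactors hp)
  · rintro ⟨hrad, h8⟩
    have hradp : ∀ p : ℕ, p.Prime → p ∣ m → p ∣ q - 1 := by
      intro p hp hpm
      exact dvd_trans (Finset.dvd_prod_of_mem _ (Nat.mem_primeFactors.mpr ⟨hp, hpm, hm0⟩)) hrad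
    set e := Nat.gcd m (q - 1) with hedef
    have he : e ∣ m := Nat.gcd_dvd_left _ _
    set t := m / e with htdef
    have htm : t ∣ m := Nat.div_dvd_of_dvd he
    have htn : t ∣ n := htm.trans hmn
    have hte : t * e = m := Nat.div_mul_cancel he
    have ht0 : t ≠ 0 := by
      intro h; rw [h, zero_mul] at hte; exact hm0 hte.symm
    have htpos : 0 < t := Nat.pos_of_ne_zero ht0
    have hCiff : ∀ i : ℕ, m ∣ q ^ i - 1 ↔ t ∣ i := edc_C q m hq2 hm0 hradp h8
    refine ⟨n / t, Nat.div_pos (Nat.le_of_dvd hn htn) htpos, Nat.div_dvd_of_dvd htn, γ, ?_⟩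
    have hqunit : IsUnit (q : ZMod m) := by
      rw [ZMod.isUnit_iff_coprime]; exact hcmq.symm
    -- subset
    have hsub : {x : ZMod n | ∃ i : ℕ, x = γ * (q : ZMod n) ^ i} ⊆
        (γ + ·) '' ((AddSubgroup.closure {((↑(n / t) : ZMod n))} :
          AddSubgroup (ZMod n)) : Set (ZMod n)) := by
      rintro x ⟨i, rfl⟩
      refine ⟨γ * (q : ZMod n) ^ i - γ, ?_, by ring⟩
      rw [SetLike.mem_coe, edc_closure_mem htn ht0]
      have hecast : γ * ((t * q ^ i : ℕ) : ZMod n) = γ * ((t * 1 : ℕ) : ZMod n) := by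
        apply (hkeyiff _ _).mpr
        rw [ZMod.natCast_eq_natCast_iff]
        have hle : t * 1 ≤ t * q ^ i := Nat.mul_le_mul_left t (Nat.one_le_pow i q (by omega))
        have hdvd : m ∣ t * q ^ i - t * 1 := by
          obtain ⟨c, hc⟩ : e ∣ q ^ i - 1 :=
              dvd_trans (Nat.gcd_dvd_right _ _) (by simpa using Nat.sub_dvd_pow_sub_pow q 1 i)
          refine ⟨c, ?_⟩
          have h1 : q ^ i = 1 + e * c := by
            have := Nat.one_le_pow i q (by omega); omega
          have h2 : t * (1 + e * c) = t * 1 + m * c := by rw [← hte]; ring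
          rw [h1]
          omega
        exact ((Nat.modEq_iff_dvd' hle).mpr hdvd).symm
      have : t • (γ * (q : ZMod n) ^ i - γ) =
          γ * ((t * q ^ i : ℕ) : ZMod n) - γ * ((t * 1 : ℕ) : ZMod n) := by
        push_cast
        rw [smul_sub, nsmul_eq_mul, nsmul_eq_mul]
        ring
      rw [this, hecast, sub_self]
    apply Set.eq_of_subset_of_ncard_le hsub
    -- cardinality
    have hcard1 : ((γ + ·) '' ((AddSubgroup.closure {((↑(n / t) : ZMod n))} :
        AddSubgroup (ZMod n)) : Set (ZMod n))).ncard ≤ t := by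
      apply le_trans (Set.ncard_image_le (Set.toFinite _))
      have hKsub : ((AddSubgroup.closure {((↑(n / t) : ZMod n))} :
          AddSubgroup (ZMod n)) : Set (ZMod n)) ⊆
          (fun c : ℕ => ((n / t * c : ℕ) : ZMod n)) '' ↑(Finset.range t) := by
        intro x hx
        rw [SetLike.mem_coe, edc_closure_mem htn ht0] at hx
        have hxval : (n : ℕ) ∣ t * x.val := by
          apply (ZMod.natCast_eq_zero_iff _ _).mp
          push_cast
          rw [ZMod.natCast_val, ZMod.cast_id, ← nsmul_eq_mul]
          exact hx
        have hD : n / t * t = n := Nat.div_mul_cancel htn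
        have hDpos : 0 < n / t := Nat.div_pos (Nat.le_of_dvd hn htn) htpos
        obtain ⟨c, hc⟩ : (n / t) ∣ x.val := by
          have : t * (n / t) ∣ t * x.val := by
            rw [Nat.mul_div_cancel' htn]; exact hxval
          exact (Nat.mul_dvd_mul_iff_left htpos).mp this
        have hclt : c < t := by
          have hxlt : x.val < n := ZMod.val_lt x
          by_contra hge
          push_neg at hge
          have : n / t * t ≤ n / t * c := Nat.mul_le_mul_left _ hge
          omega
        refine ⟨c, Finset.mem_coe.mpr (Finset.mem_range.mpr hclt), ?_⟩
        have hxx : ((x.val : ℕ) : ZMod n) = x := ZMod.natCast_rightInverse x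
        rw [← hxx, hc]
      calc ((AddSubgroup.closure {((↑(n / t) : ZMod n))} : AddSubgroup (ZMod n)) :
            Set (ZMod n)).ncard
          ≤ ((fun c : ℕ => ((n / t * c : ℕ) : ZMod n)) '' ↑(Finset.range t)).ncard :=
            Set.ncard_le_ncard hKsub (Set.toFinite _)
        _ ≤ (↑(Finset.range t) : Set ℕ).ncard := Set.ncard_image_le (Set.toFinite _)
        _ = t := by rw [Set.ncard_coe_finset, Finset.card_range]
    have hcard2 : t ≤ ({x : ZMod n | ∃ i : ℕ, x = γ * (q : ZMod n) ^ i}).ncard := by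
      have hinj : Set.InjOn (fun i : ℕ => γ * (q : ZMod n) ^ i) ↑(Finset.range t) := by
        intro i hi j hj hij
        simp only [Finset.mem_coe, Finset.mem_range] at hi hj
        simp only at hij
        -- wlog
        have key : ∀ i j : ℕ, i ≤ j → j < t → γ * (q : ZMod n) ^ i = γ * (q : ZMod n) ^ j → i = j := by
          intro i j hle hjt heq
          have hcast : γ * ((q ^ i : ℕ) : ZMod n) = γ * ((q ^ j : ℕ) : ZMod n) := by
            push_cast; exact heq
          have h2 := (hkeyiff _ _).mp hcast
          push_cast at h2
          have hpow : (q : ZMod m) ^ i * 1 = (q : ZMod m) ^ i * (q : ZMod m) ^ (j - i) := by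
            rw [mul_one, ← pow_add]
            rw [show i + (j - i) = j by omega]
            exact h2
          have h3 : (1 : ZMod m) = (q : ZMod m) ^ (j - i) := (hqunit.pow i).mul_left_cancel hpow
          have h4 : m ∣ q ^ (j - i) - 1 := by
            apply (ZMod.natCast_eq_zero_iff _ _).mp
            rw [Nat.cast_sub (Nat.one_le_pow _ _ (by omega)), Nat.cast_one]
            push_cast
            rw [← h3, sub_self]
          have h5 : t ∣ j - i := (hCiff _).mp h4
          rcases Nat.eq_zero_or_pos (j - i) with h6 | h6
          · omega
          · have := Nat.le_of_dvd h6 h5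
            omega
        rcases le_total i j with h | h
        · exact key i j h hj hij
        · exact (key j i h hi hij.symm).symm
      calc t = (↑(Finset.range t) : Set ℕ).ncard := by
            rw [Set.ncard_coe_finset, Finset.card_range]
        _ = ((fun i : ℕ => γ * (q : ZMod n) ^ i) '' ↑(Finset.range t)).ncard :=
            (Set.ncard_image_of_injOn hinj).symm
        _ ≤ ({x : ZMod n | ∃ i : ℕ, x = γ * (q : ZMod n) ^ i}).ncard := by
            apply Set.ncard_le_ncard _ (Set.toFinite _)
            rintro x ⟨i, _, rfl⟩
            exact ⟨i, rfl⟩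
    exact le_trans hcard1 hcard2
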